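/- Let p and q be coprime positive integers with 0 < p < q and such that at least one of p and q is even. Then there exists a nonempty finite list of nonzero even integers [e_1, e_2, ..., e_k] such that p/q equals the negative-type continued fraction value 1/(e_1 - 1/(e_2 - 1/(... - 1/e_k))); formally, defining cf : List ℤ → ℚ recursively by cf [] = 0 and cf (e :: l) = (e - cf l)⁻¹, one has cf [e_1, ..., e_k] = p/q with every e_i even and nonzero. -/

import Mathlib

/-- Negative-type continued fraction value of a finite list of integers:
`cf [] = 0` and `cf (e :: l) = (e - cf l)⁻¹` (as a rational number). -/
def cf : List ℤ → ℚ
  | [] => 0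
  | e :: l => ((e : ℚ) - cf l)⁻¹

lemma cf_aux : ∀ n : ℕ, ∀ a b : ℤ, a.natAbs ≤ n → b ≠ 0 → |a| < |b| →
    IsCoprime a b → Even (a * b) →
    ∃ l : List ℤ, (∀ e ∈ l, Even e ∧ e ≠ 0) ∧ cf l = (a : ℚ) / (b : ℚ) := by
  intro n
  induction n with
  | zero =>
    intro a b ha hb _ _ _
    have ha0 : a = 0 := Int.natAbs_eq_zero.mp (Nat.le_zero.mp ha)
    subst ha0
    exact ⟨[], by simp, by simp [cf]⟩
  | succ n ih =>
    intro a b ha hb hab hcop heven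
    by_cases ha0 : a = 0
    · subst ha0; exact ⟨[], by simp, by simp [cf]⟩
    · -- construct the even partial quotient e with |e*a - b| < |a|
      have habs : 0 < |a| := abs_pos.mpr ha0
      obtain ⟨s, hsa, hs1⟩ : ∃ s : ℤ, s * a = |a| ∧ (s = 1 ∨ s = -1) := by
        rcases lt_trichotomy a 0 with h | h | h
        · exact ⟨-1, by rw [abs_of_neg h]; ring, Or.inr rfl⟩
        · exact absurd h ha0
        · exact ⟨1, by rw [abs_of_pos h]; ring, Or.inl rfl⟩
      set m : ℤ := 2 * |a| with hm_def
      have hm : 0 < m := by positivity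
      set k : ℤ := b / m with hk_def
      set r : ℤ := b % m with hr_def
      have hr0 : 0 ≤ r := Int.emod_nonneg b (by omega)
      have hrm : r < m := Int.emod_lt_of_pos b hm
      have hb' : m * k + r = b := Int.mul_ediv_add_emod b m
      have key : ∃ e : ℤ, Even e ∧ |e * a - b| < |a| := by
        by_cases hr : r < |a|
        · refine ⟨2 * k * s, ⟨k * s, by ring⟩, ?_⟩
          have h1 : 2 * k * s * a - b = -r := by
            have h2 : 2 * k * s * a = m * k := by
              have : 2 * k * s * a = 2 * k * (s * a) := by ring
              rw [this, hsa, hm_def]; ring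
            rw [← hb', h2]; ring
          rw [h1, abs_neg, abs_of_nonneg hr0]; exact hr
        · -- r ≥ |a|; show r ≠ |a| using coprimality and parity
          push_neg at hr
          have hne : r ≠ |a| := by
            intro hre
            have hdvd : a ∣ b := by
              rw [← abs_dvd]
              exact ⟨2 * k + 1, by rw [← hb', hre, hm_def]; ring⟩
            have hunit : IsUnit a := hcop.isUnit_of_dvd' dvd_rfl hdvd
            have ha1 : a = 1 ∨ a = -1 := Int.isUnit_iff.mp hunit
            have hbodd : b = m * k + |a| := by omega
            have habs1 : |a| = 1 := by rcases ha1 with h | h <;> simp [h]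
            have hbval : b = 2 * k + 1 := by
              rw [← hb', hre, habs1, hm_def, habs1]; ring
            rcases Int.even_mul.mp heven with he | he
            · rcases ha1 with h | h <;> subst h <;> exact absurd he (by decide)
            · obtain ⟨c, hc⟩ := he
              omega
          have hr' : |a| < r := lt_of_le_of_ne hr (Ne.symm hne)
          refine ⟨2 * k * s + 2 * s, ⟨k * s + s, by ring⟩, ?_⟩
          have h1 : (2 * k * s + 2 * s) * a - b = 2 * |a| - r := by
            have h2 : 2 * k * s * a = m * k := by
              have : 2 * k * s * a = 2 * k * (s * a) := by ring
              rw [this, hsa, hm_def]; ring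
            have h3 : 2 * s * a = 2 * |a| := by
              have : 2 * s * a = 2 * (s * a) := by ring
              rw [this, hsa]
            have h4 : (2 * k * s + 2 * s) * a = 2 * k * s * a + 2 * s * a := by ring
            rw [h4, h2, h3, ← hb', hm_def]; ring
          rw [h1]
          rw [abs_of_pos (by omega)]
          omega
      obtain ⟨e, he, hlt⟩ := key
      have he0 : e ≠ 0 := by
        intro h
        subst h
        simp only [zero_mul, zero_sub, abs_neg] at hlt
        omega
      -- the next numerator
      set a' : ℤ := e * a - b with ha'_def
      have hcop' : IsCoprime a' a := by
        have h := (hcop.symm.neg_left).add_mul_left_left e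
        rwa [show -b + a * e = a' by rw [ha'_def]; ring] at h
      have heven' : Even (a' * a) := by
        have h1 : Even (e * (a * a)) := he.mul_right (a * a)
        have h2 : Even (b * a) := by rwa [mul_comm] at heven
        have h3 := h1.sub h2
        rwa [show e * (a * a) - b * a = a' * a by rw [ha'_def]; ring] at h3
      have hna : a'.natAbs ≤ n := by
        have h1 : |a'| < |a| := hlt
        have h2 := Int.abs_eq_natAbs a'
        have h3 := Int.abs_eq_natAbs a
        omega
      obtain ⟨l, hl1, hl2⟩ := ih a' a hna ha0 hlt hcop' heven'
      refine ⟨e :: l, ?_, ?_⟩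
      · intro x hx
        rcases List.mem_cons.mp hx with h | h
        · exact h ▸ ⟨he, he0⟩
        · exact hl1 x h
      · have haQ : (a : ℚ) ≠ 0 := Int.cast_ne_zero.mpr ha0
        have hbQ : (b : ℚ) ≠ 0 := Int.cast_ne_zero.mpr hb
        show ((e : ℚ) - cf l)⁻¹ = (a : ℚ) / b
        rw [hl2]
        have hca : ((a' : ℤ) : ℚ) = (e : ℚ) * a - b := by
          rw [ha'_def]; push_cast; ring
        rw [hca]
        rw [show (e : ℚ) - ((e : ℚ) * a - b) / a = (b : ℚ) / a by field_simp; ring]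
        rw [inv_div]

/-- Every rational `p/q` in lowest terms with `0 < p < q` and at least one of `p, q` even
admits a continued fraction expansion in which every partial quotient is a nonzero even
integer. -/
theorem exists_even_continued_fraction (p q : ℤ) (hp : 0 < p) (hpq : p < q)
    (hcop : IsCoprime p q) (heven : Even p ∨ Even q) :
    ∃ l : List ℤ, l ≠ [] ∧ (∀ e ∈ l, Even e ∧ e ≠ 0) ∧ cf l = (p : ℚ) / (q : ℚ) := by
  have hq0 : q ≠ 0 := by omega
  have habs : |p| < |q| := by
    rw [abs_of_pos hp, abs_of_pos (by omega)]; exact hpq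
  have hev : Even (p * q) := Int.even_mul.mpr heven
  obtain ⟨l, h1, h2⟩ := cf_aux p.natAbs p q le_rfl hq0 habs hcop hev
  refine ⟨l, ?_, h1, h2⟩
  rintro rfl
  simp only [cf] at h2
  rcases div_eq_zero_iff.mp h2.symm with h | h
  · have : p = 0 := by exact_mod_cast h
    omega
  · have : q = 0 := by exact_mod_cast h
    omega
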